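/- For every p with 1 < p < ∞, there does not exist a set of 3 vectors on the unit circle of ℓ_p^2 whose pairwise ℓ_p-distances are all equal to 2^{1/p}. -/

import Mathlib

open Real

private lemma rpow_inv_eq_one {p S : ℝ} (hp : 1 < p) (hS : 0 ≤ S)
    (h : S ^ (1 / p) = 1) : S = 1 := by
  have hpne : p ≠ 0 := by linarith
  have h2 := congrArg (· ^ p) h
  rwa [← Real.rpow_mul hS, one_div, inv_mul_cancel₀ hpne, Real.rpow_one,
    Real.one_rpow] at h2

private lemma rpow_inv_eq_two {p S : ℝ} (hp : 1 < p) (hS : 0 ≤ S)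
    (h : S ^ (1 / p) = (2:ℝ) ^ (1 / p)) : S = 2 := by
  have hpne : p ≠ 0 := by linarith
  have h2 := congrArg (· ^ p) h
  rwa [← Real.rpow_mul hS, ← Real.rpow_mul (by norm_num : (0:ℝ) ≤ 2), one_div,
    inv_mul_cancel₀ hpne, Real.rpow_one, Real.rpow_one] at h2

private lemma zero_sign_eq {p : ℝ} (hp : 1 < p) {x y : ℝ} (h : x * y = 0) :
    |x - y| ^ p = |x| ^ p + |y| ^ p := by
  have hpne : p ≠ 0 := by linarith
  rcases mul_eq_zero.mp h with h | h <;> subst h <;>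
    simp [abs_zero, Real.zero_rpow hpne, abs_sub_comm]

private lemma same_sign_lt {p : ℝ} (hp : 1 < p) {x y : ℝ} (h : 0 < x * y) :
    |x - y| ^ p < |x| ^ p + |y| ^ p := by
  have hp0 : (0:ℝ) < p := by linarith
  have key : ∀ a b : ℝ, 0 < a → 0 < b → |a - b| ^ p < a ^ p + b ^ p := by
    intro a b ha hb
    have h1 : |a - b| < max a b := by
      rcases le_total a b with h | h
      · rw [abs_of_nonpos (by linarith), max_eq_right h]; linarith
      · rw [abs_of_nonneg (by linarith), max_eq_left h]; linarith
    have h2 : |a - b| ^ p < max a b ^ p :=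
      Real.rpow_lt_rpow (abs_nonneg _) h1 hp0
    have h3 : max a b ^ p ≤ a ^ p + b ^ p := by
      rcases max_cases a b with ⟨he, _⟩ | ⟨he, _⟩ <;> rw [he]
      · nlinarith [Real.rpow_pos_of_pos hb p]
      · nlinarith [Real.rpow_pos_of_pos ha p]
    linarith
  rcases mul_pos_iff.mp h with ⟨hx, hy⟩ | ⟨hx, hy⟩
  · rw [abs_of_pos hx, abs_of_pos hy]; exact key x y hx hy
  · rw [abs_of_neg hx, abs_of_neg hy]
    have h4 := key (-x) (-y) (by linarith) (by linarith)
    rw [show -x - -y = -(x - y) by ring, abs_neg] at h4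
    exact h4

private lemma opp_sign_lt {p : ℝ} (hp : 1 < p) {x y : ℝ} (h : x * y < 0) :
    |x| ^ p + |y| ^ p < |x - y| ^ p := by
  have key : ∀ a b : ℝ, 0 < a → 0 < b → a ^ p + b ^ p < (a + b) ^ p := by
    intro a b ha hb
    have hs : 0 < a + b := by linarith
    have hspne : a + b ≠ 0 := ne_of_gt hs
    have frac : ∀ c : ℝ, 0 < c → c < a + b → c ^ p < (a + b) ^ p * (c / (a + b)) := by
      intro c hc hcs
      have h00 : 0 < c / (a + b) := by positivity
      have h01 : c / (a + b) < 1 := by rw [div_lt_one hs]; exact hcs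
      have hlt : (c / (a + b)) ^ p < c / (a + b) := by
        calc (c / (a + b)) ^ p < (c / (a + b)) ^ (1:ℝ) :=
              Real.rpow_lt_rpow_of_exponent_gt h00 h01 hp
          _ = c / (a + b) := Real.rpow_one _
      have heq : c ^ p = (a + b) ^ p * (c / (a + b)) ^ p := by
        rw [← Real.mul_rpow hs.le h00.le]
        congr 1
        field_simp
      rw [heq]
      exact (mul_lt_mul_iff_right₀ (Real.rpow_pos_of_pos hs p)).mpr hlt
    have ha' := frac a ha (by linarith)
    have hb' := frac b hb (by linarith)
    have hsum : (a + b) ^ p * (a / (a + b)) + (a + b) ^ p * (b / (a + b)) = (a + b) ^ p := by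
      field_simp
    linarith
  rcases mul_neg_iff.mp h with ⟨hx, hy⟩ | ⟨hx, hy⟩
  · rw [abs_of_pos hx, abs_of_neg hy, show |x - y| = x + -y by rw [abs_of_pos (by linarith)]; ring]
    exact key x (-y) hx (by linarith)
  · rw [abs_of_neg hx, abs_of_pos hy, show |x - y| = -x + y by rw [abs_of_neg (by linarith)]; ring]
    exact key (-x) y (by linarith) hy

private lemma pair_sign {p : ℝ} (hp : 1 < p) {x0 x1 y0 y1 : ℝ}
    (hx : |x0| ^ p + |x1| ^ p = 1) (hy : |y0| ^ p + |y1| ^ p = 1)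
    (hd : |x0 - y0| ^ p + |x1 - y1| ^ p = 2) :
    (x0 * y0 = 0 ∧ x1 * y1 = 0) ∨ (x0 * y0) * (x1 * y1) < 0 := by
  rcases lt_trichotomy (x0 * y0) 0 with h0 | h0 | h0 <;>
    rcases lt_trichotomy (x1 * y1) 0 with h1 | h1 | h1
  · have g0 := opp_sign_lt hp h0; have g1 := opp_sign_lt hp h1; linarith
  · have g0 := opp_sign_lt hp h0; have g1 := zero_sign_eq hp h1; linarith
  · exact Or.inr (mul_neg_of_neg_of_pos h0 h1)
  · have g0 := zero_sign_eq hp h0; have g1 := opp_sign_lt hp h1; linarith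
  · exact Or.inl ⟨h0, h1⟩
  · have g0 := zero_sign_eq hp h0; have g1 := same_sign_lt hp h1; linarith
  · exact Or.inr (mul_neg_of_pos_of_neg h0 h1)
  · have g0 := same_sign_lt hp h0; have g1 := zero_sign_eq hp h1; linarith
  · have g0 := same_sign_lt hp h0; have g1 := same_sign_lt hp h1; linarith

private lemma Dsymm {x0 x1 y0 y1 : ℝ}
    (h : (x0 * y0 = 0 ∧ x1 * y1 = 0) ∨ (x0 * y0) * (x1 * y1) < 0) :
    (y0 * x0 = 0 ∧ y1 * x1 = 0) ∨ (y0 * x0) * (y1 * x1) < 0 := by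
  rcases h with ⟨h1, h2⟩ | h
  · exact Or.inl ⟨by rw [mul_comm]; exact h1, by rw [mul_comm]; exact h2⟩
  · right; rw [mul_comm y0, mul_comm y1]; exact h

private lemma zp {a0 a1 b0 b1 c0 c1 : ℝ}
    (ha : ¬(a0 = 0 ∧ a1 = 0)) (hb : ¬(b0 = 0 ∧ b1 = 0)) (hc : ¬(c0 = 0 ∧ c1 = 0))
    (h1 : a0 * b0 = 0) (h2 : a1 * b1 = 0)
    (hac : (a0 * c0 = 0 ∧ a1 * c1 = 0) ∨ (a0 * c0) * (a1 * c1) < 0)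
    (hbc : (b0 * c0 = 0 ∧ b1 * c1 = 0) ∨ (b0 * c0) * (b1 * c1) < 0) : False := by
  by_cases ha0 : a0 = 0
  · have ha1 : a1 ≠ 0 := fun h => ha ⟨ha0, h⟩
    have hb1 : b1 = 0 := (mul_eq_zero.mp h2).resolve_left ha1
    have hb0 : b0 ≠ 0 := fun h => hb ⟨h, hb1⟩
    rcases hac with ⟨hc0, hc1⟩ | hlt
    · have hc1' : c1 = 0 := (mul_eq_zero.mp hc1).resolve_left ha1
      have hc0' : c0 ≠ 0 := fun h => hc ⟨h, hc1'⟩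
      rcases hbc with ⟨hbc0, _⟩ | hlt'
      · exact (mul_ne_zero hb0 hc0') hbc0
      · rw [hb1] at hlt'; simp at hlt'
    · rw [ha0] at hlt; simp at hlt
  · have hb0 : b0 = 0 := (mul_eq_zero.mp h1).resolve_left ha0
    have hb1 : b1 ≠ 0 := fun h => hb ⟨hb0, h⟩
    have ha1 : a1 = 0 := (mul_eq_zero.mp h2).resolve_right hb1
    rcases hac with ⟨hc0, _⟩ | hlt
    · have hc0' : c0 = 0 := (mul_eq_zero.mp hc0).resolve_left ha0
      have hc1' : c1 ≠ 0 := fun h => hc ⟨hc0', h⟩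
      rcases hbc with ⟨_, hbc1⟩ | hlt'
      · exact (mul_ne_zero hb1 hc1') hbc1
      · rw [hb0] at hlt'; simp at hlt'
    · rw [ha1] at hlt; simp at hlt

private lemma combo {a0 a1 b0 b1 c0 c1 : ℝ}
    (ha : ¬(a0 = 0 ∧ a1 = 0)) (hb : ¬(b0 = 0 ∧ b1 = 0)) (hc : ¬(c0 = 0 ∧ c1 = 0))
    (hab : (a0 * b0 = 0 ∧ a1 * b1 = 0) ∨ (a0 * b0) * (a1 * b1) < 0)
    (hac : (a0 * c0 = 0 ∧ a1 * c1 = 0) ∨ (a0 * c0) * (a1 * c1) < 0)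
    (hbc : (b0 * c0 = 0 ∧ b1 * c1 = 0) ∨ (b0 * c0) * (b1 * c1) < 0) : False := by
  rcases hab with ⟨h1, h2⟩ | hab'
  · exact zp ha hb hc h1 h2 hac hbc
  rcases hac with ⟨h1, h2⟩ | hac'
  · exact zp ha hc hb h1 h2 (Or.inr hab') (Dsymm hbc)
  rcases hbc with ⟨h1, h2⟩ | hbc'
  · exact zp hb hc ha h1 h2 (Dsymm (Or.inr hab')) (Dsymm (Or.inr hac'))
  · have h4 : 0 < ((a0 * b0) * (a1 * b1)) * ((a0 * c0) * (a1 * c1)) :=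
      mul_pos_of_neg_of_neg hab' hac'
    nlinarith [h4, hbc', sq_nonneg (a0 * a1), mul_nonpos_of_nonneg_of_nonpos
      (sq_nonneg (a0 * a1)) hbc'.le]

private lemma on_circle_ne {p : ℝ} (hp : 1 < p) {x0 x1 : ℝ}
    (hx : |x0| ^ p + |x1| ^ p = 1) : ¬(x0 = 0 ∧ x1 = 0) := by
  rintro ⟨h0, h1⟩
  rw [h0, h1] at hx
  simp [abs_zero, Real.zero_rpow (show p ≠ 0 by linarith)] at hx

/-- For `1 < p < ∞` there is no set of three points on the unit circle of `ℓ_p^2`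
whose pairwise `ℓ_p`-distances all equal `2^(1/p)`. -/
theorem no_three_points_on_lp_circle (p : ℝ) (hp : 1 < p) :
    ¬ ∃ u v w : Fin 2 → ℝ, u ≠ v ∧ u ≠ w ∧ v ≠ w ∧
      (∑ i, |u i| ^ p) ^ (1 / p) = 1 ∧
      (∑ i, |v i| ^ p) ^ (1 / p) = 1 ∧
      (∑ i, |w i| ^ p) ^ (1 / p) = 1 ∧
      (∑ i, |u i - v i| ^ p) ^ (1 / p) = (2 : ℝ) ^ (1 / p) ∧
      (∑ i, |u i - w i| ^ p) ^ (1 / p) = (2 : ℝ) ^ (1 / p) ∧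
      (∑ i, |v i - w i| ^ p) ^ (1 / p) = (2 : ℝ) ^ (1 / p) := by
  rintro ⟨u, v, w, -, -, -, hu, hv, hw, huv, huw, hvw⟩
  rw [Fin.sum_univ_two] at hu hv hw huv huw hvw
  have hn : ∀ a b : ℝ, (0:ℝ) ≤ |a| ^ p + |b| ^ p := fun a b =>
    add_nonneg (Real.rpow_nonneg (abs_nonneg _) _) (Real.rpow_nonneg (abs_nonneg _) _)
  have hu' := rpow_inv_eq_one hp (hn _ _) hu
  have hv' := rpow_inv_eq_one hp (hn _ _) hv
  have hw' := rpow_inv_eq_one hp (hn _ _) hw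
  have huv' := rpow_inv_eq_two hp (hn _ _) huv
  have huw' := rpow_inv_eq_two hp (hn _ _) huw
  have hvw' := rpow_inv_eq_two hp (hn _ _) hvw
  exact combo (on_circle_ne hp hu') (on_circle_ne hp hv') (on_circle_ne hp hw')
    (pair_sign hp hu' hv' huv') (pair_sign hp hu' hw' huw')
    (pair_sign hp hv' hw' hvw')
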